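/- Let Ω be a circle of radius R with chord BC, let m be the line parallel to BC at distance R from BC (on a chosen side), and let O be the center of Ω. Let ω be a circle with center O₁ tangent to line BC at D (on the chosen side of BC) and internally tangent to Ω. Then O₁O equals the distance from O₁ to m; consequently O₁ lies on the parabola with focus O and directrix m, and B and C also lie on this parabola. -/

import Mathlib

open EuclideanGeometry Metric AffineSubspace Real RealInnerProductSpace

noncomputable section

/-- The Euclidean plane. -/
abbrev Pt := EuclideanSpace ℝ (Fin 2)

/-- The line through two points. -/
def lineTh (A B : Pt) : AffineSubspace ℝ Pt := affineSpan ℝ {A, B}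

/-- The circle with center `O` and radius `r` is tangent to the line `AB` at the point `E`. -/
def TangentAt (O : Pt) (r : ℝ) (A B E : Pt) : Prop :=
  E ∈ lineTh A B ∧ dist O E = r ∧ ∀ Q ∈ lineTh A B, r ≤ dist O Q

/-- `I` is the incenter of triangle `ABC`: it lies strictly inside the triangle and is
equidistant from the three side lines. -/
def IsIncenter (I A B C : Pt) : Prop :=
  (lineTh B C).SSameSide I A ∧ (lineTh C A).SSameSide I B ∧ (lineTh A B).SSameSide I C ∧
  infDist I (lineTh B C : Set Pt) = infDist I (lineTh C A : Set Pt) ∧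
  infDist I (lineTh C A : Set Pt) = infDist I (lineTh A B : Set Pt)

/-- `J` is the excenter of triangle `ABC` opposite the vertex `C`. -/
def IsExcenterC (J A B C : Pt) : Prop :=
  (lineTh A B).SOppSide J C ∧ (lineTh C B).SSameSide J A ∧ (lineTh C A).SSameSide J B ∧
  infDist J (lineTh B C : Set Pt) = infDist J (lineTh C A : Set Pt) ∧
  infDist J (lineTh C A : Set Pt) = infDist J (lineTh A B : Set Pt)

/-- Centers of circles tangent to a chord and internally tangent to the circle lie on a
parabola with focus the center and directrix the parallel line at distance `R`. -/
lemma exists_smul_of_inner_eq_zero {n v w : Pt} (hn : n ≠ 0) (hv : v ≠ 0)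
    (hvn : (inner ℝ n v : ℝ) = 0) (hwn : (inner ℝ n w : ℝ) = 0) : ∃ t : ℝ, w = t • v := by
  set K := (ℝ ∙ n)ᗮ with hK
  have hfin : Module.finrank ℝ K = 1 := by
    have h1 : Module.finrank ℝ (ℝ ∙ n) = 1 := finrank_span_singleton hn
    have h2 := Submodule.finrank_add_finrank_orthogonal (𝕜 := ℝ) (ℝ ∙ n)
    rw [h1, finrank_euclideanSpace_fin] at h2
    rw [hK]
    omega
  have hvK : v ∈ K := by
    rw [hK, Submodule.mem_orthogonal_singleton_iff_inner_left]
    rwa [real_inner_comm] at hvn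
  have hwK : w ∈ K := by
    rw [hK, Submodule.mem_orthogonal_singleton_iff_inner_left]
    rwa [real_inner_comm] at hwn
  have hv' : (⟨v, hvK⟩ : K) ≠ 0 := by
    simp [Subtype.ext_iff, hv]
  obtain ⟨c, hc⟩ := (finrank_eq_one_iff_of_nonzero' (⟨v, hvK⟩ : K) hv').mp hfin ⟨w, hwK⟩
  exact ⟨c, by simpa [Subtype.ext_iff, eq_comm] using hc⟩

lemma infDist_lineTh (A A' P n : Pt) (hAA : A' ≠ A) (hn : ‖n‖ = 1)
    (hperp : (inner ℝ n (A' - A) : ℝ) = 0) :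
    infDist P (lineTh A A' : Set Pt) = |(inner ℝ (P - A) n : ℝ)| := by
  have hn0 : n ≠ 0 := by intro h; simp [h] at hn
  have hnn : (inner ℝ n n : ℝ) = 1 := by
    rw [real_inner_self_eq_norm_sq, hn]; norm_num
  set c : ℝ := inner ℝ (P - A) n with hc
  set Q : Pt := P - c • n with hQdef
  have hwn : (inner ℝ n (Q - A) : ℝ) = 0 := by
    rw [hQdef]
    have : P - c • n - A = (P - A) - c • n := by abel
    rw [this, inner_sub_right, real_inner_smul_right, hnn, real_inner_comm]
    simp [hc]
  obtain ⟨t, ht⟩ := exists_smul_of_inner_eq_zero hn0 (sub_ne_zero.mpr hAA) hperp hwn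
  have hQmem : Q ∈ (lineTh A A' : Set Pt) := by
    show Q ∈ lineTh A A'
    have hQ' : Q = (Q - A) +ᵥ A := by simp
    rw [lineTh, hQ', vadd_left_mem_affineSpan_pair]
    exact ⟨t, by simpa using ht.symm⟩
  have hdPQ : dist P Q = |c| := by
    rw [dist_eq_norm]
    have : P - Q = c • n := by rw [hQdef]; abel
    rw [this, norm_smul, hn]
    simp
  refine le_antisymm ?_ ?_
  · calc infDist P (lineTh A A' : Set Pt) ≤ dist P Q := infDist_le_dist_of_mem hQmem
      _ = |c| := hdPQ
  · by_contra hcon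
    push_neg at hcon
    obtain ⟨y, hy, hlt⟩ := (infDist_lt_iff ⟨Q, hQmem⟩).mp hcon
    have hy'' : y - A ∈ vectorSpan ℝ ({A, A'} : Set Pt) := by
      have := AffineSubspace.vsub_mem_direction hy (by
        exact left_mem_affineSpan_pair ℝ A A')
      simpa [lineTh, direction_affineSpan] using this
    rw [mem_vectorSpan_pair_rev] at hy''
    obtain ⟨s, hs⟩ := hy''
    have hy' : y = s • (A' - A) + A := by
      have : (s • (A' -ᵥ A) : Pt) = y - A := hs
      simp only [vsub_eq_sub] at this
      rw [this]; abel
    refine absurd hlt (not_lt.mpr ?_)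
    have hinner : (inner ℝ (P - y) n : ℝ) = c := by
      rw [hy', hc]
      have : P - (s • (A' - A) + A) = (P - A) - s • (A' - A) := by abel
      rw [this, inner_sub_left, real_inner_smul_left]
      rw [real_inner_comm (A' - A) n] at hperp
      rw [hperp]; ring
    calc |c| = |(inner ℝ (P - y) n : ℝ)| := by rw [hinner]
      _ ≤ ‖P - y‖ * ‖n‖ := abs_real_inner_le_norm _ _
      _ = dist P y := by rw [hn, dist_eq_norm]; ring

lemma mem_lineTh_sub {X Y D : Pt} (h : D ∈ lineTh X Y) : ∃ s : ℝ, D - X = s • (Y - X) := by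
  have h2 := AffineSubspace.vsub_mem_direction h (left_mem_affineSpan_pair ℝ X Y)
  have h3 : D -ᵥ X ∈ vectorSpan ℝ ({X, Y} : Set Pt) := by
    simpa [lineTh, direction_affineSpan] using h2
  rw [mem_vectorSpan_pair_rev] at h3
  obtain ⟨s, hs⟩ := h3
  exact ⟨s, hs.symm⟩

theorem centers_on_parabola (O B C n O₁ D : Pt) (R r : ℝ)
    (hBC : B ≠ C) (hR : 0 < R)
    (hOB : dist O B = R) (hOC : dist O C = R)
    (hn : ‖n‖ = 1) (hperp : (inner ℝ n (C - B) : ℝ) = 0)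
    (hr : 0 < r) (hrR : r < R)
    (hD : TangentAt O₁ r B C D) (hO₁ : O₁ = D + r • n)
    (hint : dist O₁ O = R - r) :
    infDist O₁ (lineTh (B + R • n) (C + R • n) : Set Pt) = dist O₁ O ∧
    infDist B (lineTh (B + R • n) (C + R • n) : Set Pt) = dist B O ∧
    infDist C (lineTh (B + R • n) (C + R • n) : Set Pt) = dist C O := by
  have hnn : (inner ℝ n n : ℝ) = 1 := by
    rw [real_inner_self_eq_norm_sq, hn]; norm_num
  set A : Pt := B + R • n with hA
  set A' : Pt := C + R • n with hA'
  have hdiff : A' - A = C - B := by rw [hA, hA']; abel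
  have hAA : A' ≠ A := by
    intro h
    apply hBC
    have : C - B = 0 := by rw [← hdiff, h]; simp
    have := sub_eq_zero.mp this
    exact this.symm
  have hperp' : (inner ℝ n (A' - A) : ℝ) = 0 := by rw [hdiff]; exact hperp
  have key : ∀ P : Pt, infDist P (lineTh A A' : Set Pt) = |(inner ℝ (P - A) n : ℝ)| :=
    fun P => infDist_lineTh A A' P n hAA hn hperp'
  have hperp2 : (inner ℝ (C - B) n : ℝ) = 0 := by rw [real_inner_comm]; exact hperp
  obtain ⟨s, hs⟩ := mem_lineTh_sub hD.1
  have hDBn : (inner ℝ (D - B) n : ℝ) = 0 := by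
    rw [hs, real_inner_smul_left, hperp2]
    ring
  refine ⟨?_, ?_, ?_⟩
  · rw [key O₁]
    have h1 : O₁ - A = (D - B) + (r - R) • n := by
      rw [hO₁, hA, sub_smul]; abel
    rw [h1, inner_add_left, hDBn, real_inner_smul_left, real_inner_comm n n, hnn, hint]
    rw [abs_of_nonpos (by nlinarith)]
    ring
  · rw [key B]
    have h1 : B - A = (-R) • n := by rw [hA, neg_smul]; abel
    rw [h1, real_inner_smul_left, real_inner_comm n n, hnn, dist_comm B O, hOB]
    rw [abs_of_nonpos (by nlinarith)]
    ring
  · rw [key C]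
    have h1 : C - A = (C - B) + (-R) • n := by rw [hA, neg_smul]; abel
    rw [h1, inner_add_left, hperp2, real_inner_smul_left,
      real_inner_comm n n, hnn, dist_comm C O, hOC]
    rw [abs_of_nonpos (by nlinarith)]
    ring
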